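/- arXiv:2403.01829 — 2 statements merged into one kernel-verified Lean document; each statement's English description precedes it below -/
import Mathlib

section
/- For all signs σ₁, σ₂ ∈ {1,-1} and all measurement-outcome signs ε₁, ε₂ ∈ {1,-1}, the two fusion projectors propagate through the tensor product of X-type local Clifford operators as follows: M_{ε₁}(X ⊗ Z) * M_{ε₂}(Z ⊗ X) * (U_X^{σ₁} ⊗ U_X^{σ₂}) = (U_X^{σ₁} ⊗ U_X^{σ₂}) * M_{ε₁}(-σ₂•(X ⊗ Y)) * M_{ε₂}(-σ₁•(Y ⊗ X)) as 4×4 complex matrices, where ⊗ denotes the Kronecker product. -/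
open Matrix Kronecker

/-- Pauli X matrix. -/
noncomputable def PX : Matrix (Fin 2) (Fin 2) ℂ := !![0, 1; 1, 0]

/-- Pauli Y matrix. -/
noncomputable def PY : Matrix (Fin 2) (Fin 2) ℂ := !![0, -Complex.I; Complex.I, 0]

/-- Pauli Z matrix. -/
noncomputable def PZ : Matrix (Fin 2) (Fin 2) ℂ := !![1, 0; 0, -1]

/-- Measurement projector with outcome sign `ε`: `M_ε(A) = (1 + ε•A)/2`. -/
noncomputable def Mproj {n : Type*} [Fintype n] [DecidableEq n] (ε : ℂ)
    (A : Matrix n n ℂ) : Matrix n n ℂ :=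
  (2 : ℂ)⁻¹ • (1 + ε • A)

/-- Local Clifford operator `U_P^σ = exp(σ•(π/4)•(i•P))`. -/
noncomputable def U (σ : ℂ) (P : Matrix (Fin 2) (Fin 2) ℂ) : Matrix (Fin 2) (Fin 2) ℂ :=
  NormedSpace.exp (σ • ((Real.pi / 4 : ℂ) • (Complex.I • P)))

/-- The unnormalized `U_X^σ`. -/
noncomputable def W (σ : ℂ) : Matrix (Fin 2) (Fin 2) ℂ :=
  (1 : Matrix (Fin 2) (Fin 2) ℂ) + (σ * Complex.I) • PX

lemma exp_cX (c : ℂ) : NormedSpace.exp (c • PX) =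
    ((Complex.exp c + Complex.exp (-c))/2) • (1 : Matrix (Fin 2) (Fin 2) ℂ)
      + ((Complex.exp c - Complex.exp (-c))/2) • PX := by
  have hH : IsUnit (!![1, 1; 1, -1] : Matrix (Fin 2) (Fin 2) ℂ) := by
    rw [Matrix.isUnit_iff_isUnit_det]
    simp [Matrix.det_fin_two_of]
    norm_num
  have hHinv : (!![1, 1; 1, -1] : Matrix (Fin 2) (Fin 2) ℂ)⁻¹ = (2:ℂ)⁻¹ • !![1, 1; 1, -1] := by
    apply Matrix.inv_eq_right_inv
    ext i j
    fin_cases i <;> fin_cases j <;>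
      simp [Matrix.mul_apply, Fin.sum_univ_two, Matrix.one_apply] <;> ring
  have key : c • PX = !![1, 1; 1, -1] * Matrix.diagonal ![c, -c]
      * (!![1, 1; 1, -1] : Matrix (Fin 2) (Fin 2) ℂ)⁻¹ := by
    rw [hHinv]
    ext i j
    fin_cases i <;> fin_cases j <;>
      simp [Matrix.mul_apply, Fin.sum_univ_two, Matrix.diagonal_apply, PX,
        Matrix.vecHead, Matrix.vecTail, Matrix.vecMul_diagonal, Pi.exp_def] <;> ring
  rw [key, Matrix.exp_conj _ _ hH, Matrix.exp_diagonal, hHinv]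
  ext i j
  fin_cases i <;> fin_cases j <;>
    simp [Matrix.mul_apply, Fin.sum_univ_two, Matrix.diagonal_apply, Matrix.one_apply, PX,
      Function.comp, ← Complex.exp_eq_exp_ℂ, Matrix.vecHead, Matrix.vecTail,
      Matrix.vecMul_diagonal, Pi.exp_def] <;> ring

lemma UX (σ : ℂ) (hσ : σ = 1 ∨ σ = -1) :
    U σ PX = ((Real.sqrt 2 / 2 : ℂ)) • W σ := by
  have harg : σ • ((Real.pi / 4 : ℂ) • (Complex.I • PX))
      = ((σ * (Real.pi/4)) * Complex.I) • PX := by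
    rw [smul_smul, smul_smul, mul_assoc]
  have hc : Complex.cos ((Real.pi/4 : ℝ) : ℂ) = (Real.sqrt 2 / 2 : ℂ) := by
    rw [← Complex.ofReal_cos, Real.cos_pi_div_four]; push_cast; ring
  have hs : Complex.sin ((Real.pi/4 : ℝ) : ℂ) = (Real.sqrt 2 / 2 : ℂ) := by
    rw [← Complex.ofReal_sin, Real.sin_pi_div_four]; push_cast; ring
  have h1 : Complex.exp ((σ * (Real.pi/4)) * Complex.I)
      = Complex.cos (σ * (Real.pi/4)) + Complex.sin (σ * (Real.pi/4)) * Complex.I :=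
    Complex.exp_mul_I _
  have h2 : Complex.exp (-((σ * (Real.pi/4)) * Complex.I))
      = Complex.cos (σ * (Real.pi/4)) - Complex.sin (σ * (Real.pi/4)) * Complex.I := by
    have h : -((σ * (Real.pi/4)) * Complex.I) = (-(σ * (Real.pi/4))) * Complex.I := by ring
    rw [h, Complex.exp_mul_I, Complex.cos_neg, Complex.sin_neg]; ring
  have hcast : ((Real.pi : ℂ)/4) = ((Real.pi/4 : ℝ) : ℂ) := by push_cast; ring
  rw [U, harg, exp_cX, h1, h2, W]
  rcases hσ with rfl | rfl
  · rw [show (1:ℂ) * ((Real.pi:ℂ)/4) = ((Real.pi/4 : ℝ) : ℂ) by rw [← hcast]; ring, hc, hs]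
    ext i j
    fin_cases i <;> fin_cases j <;>
      simp [PX, Matrix.one_apply] <;> ring
  · rw [show (-1:ℂ) * ((Real.pi:ℂ)/4) = -((Real.pi/4 : ℝ) : ℂ) by rw [← hcast]; ring,
      Complex.cos_neg, Complex.sin_neg, hc, hs]
    ext i j
    fin_cases i <;> fin_cases j <;>
      simp [PX, Matrix.one_apply] <;> ring

lemma lX (σ : ℂ) : PX * W σ = W σ * PX := by
  ext i j
  fin_cases i <;> fin_cases j <;>
    simp [W, PX, Matrix.mul_apply, Fin.sum_univ_two, Matrix.one_apply]

lemma lZ (σ : ℂ) (hσ : σ = 1 ∨ σ = -1) : PZ * W σ = W σ * (-σ • PY) := by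
  rcases hσ with rfl | rfl <;> ext i j <;> fin_cases i <;> fin_cases j <;>
    simp [W, PX, PY, PZ, Matrix.mul_apply, Fin.sum_univ_two, Matrix.one_apply] <;>
    ring_nf <;> simp [Complex.I_sq] <;> norm_num

lemma kron_comm_mul {A B C D V₁ V₂ : Matrix (Fin 2) (Fin 2) ℂ}
    (h1 : A * V₁ = V₁ * C) (h2 : B * V₂ = V₂ * D) :
    (A ⊗ₖ B) * (V₁ ⊗ₖ V₂) = (V₁ ⊗ₖ V₂) * (C ⊗ₖ D) := by
  rw [← Matrix.mul_kronecker_mul, ← Matrix.mul_kronecker_mul, h1, h2]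

lemma Mproj_comm {n : Type*} [Fintype n] [DecidableEq n] (ε : ℂ)
    {A B V : Matrix n n ℂ} (h : A * V = V * B) :
    Mproj ε A * V = V * Mproj ε B := by
  simp only [Mproj, Matrix.smul_mul, Matrix.mul_smul, add_mul, mul_add, one_mul, mul_one,
    smul_mul_assoc, mul_smul_comm, h]

theorem fusion_proj_propagates_through_UX_UX (σ₁ σ₂ ε₁ ε₂ : ℂ)
    (hσ₁ : σ₁ = 1 ∨ σ₁ = -1) (hσ₂ : σ₂ = 1 ∨ σ₂ = -1)
    (hε₁ : ε₁ = 1 ∨ ε₁ = -1) (hε₂ : ε₂ = 1 ∨ ε₂ = -1) :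
    Mproj ε₁ (PX ⊗ₖ PZ) * Mproj ε₂ (PZ ⊗ₖ PX) * (U σ₁ PX ⊗ₖ U σ₂ PX) =
      (U σ₁ PX ⊗ₖ U σ₂ PX) * Mproj ε₁ (-σ₂ • (PX ⊗ₖ PY)) * Mproj ε₂ (-σ₁ • (PY ⊗ₖ PX)) := by
  have hUX : ∀ σ : ℂ, σ = 1 ∨ σ = -1 → PX * U σ PX = U σ PX * PX := by
    intro σ hσ
    rw [UX σ hσ, mul_smul_comm, smul_mul_assoc, lX]
  have hUZ : ∀ σ : ℂ, σ = 1 ∨ σ = -1 → PZ * U σ PX = U σ PX * (-σ • PY) := by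
    intro σ hσ
    rw [UX σ hσ, mul_smul_comm, smul_mul_assoc, lZ σ hσ]
  have commA : (PX ⊗ₖ PZ) * (U σ₁ PX ⊗ₖ U σ₂ PX)
      = (U σ₁ PX ⊗ₖ U σ₂ PX) * (-σ₂ • (PX ⊗ₖ PY)) := by
    rw [← Matrix.kronecker_smul]
    exact kron_comm_mul (hUX σ₁ hσ₁) (hUZ σ₂ hσ₂)
  have commB : (PZ ⊗ₖ PX) * (U σ₁ PX ⊗ₖ U σ₂ PX)
      = (U σ₁ PX ⊗ₖ U σ₂ PX) * (-σ₁ • (PY ⊗ₖ PX)) := by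
    rw [← Matrix.smul_kronecker]
    exact kron_comm_mul (hUZ σ₁ hσ₁) (hUX σ₂ hσ₂)
  calc Mproj ε₁ (PX ⊗ₖ PZ) * Mproj ε₂ (PZ ⊗ₖ PX) * (U σ₁ PX ⊗ₖ U σ₂ PX)
      = Mproj ε₁ (PX ⊗ₖ PZ) * (Mproj ε₂ (PZ ⊗ₖ PX) * (U σ₁ PX ⊗ₖ U σ₂ PX)) := by
        rw [mul_assoc]
    _ = Mproj ε₁ (PX ⊗ₖ PZ) * ((U σ₁ PX ⊗ₖ U σ₂ PX) * Mproj ε₂ (-σ₁ • (PY ⊗ₖ PX))) := by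
        rw [Mproj_comm ε₂ commB]
    _ = (Mproj ε₁ (PX ⊗ₖ PZ) * (U σ₁ PX ⊗ₖ U σ₂ PX)) * Mproj ε₂ (-σ₁ • (PY ⊗ₖ PX)) := by
        rw [mul_assoc]
    _ = (U σ₁ PX ⊗ₖ U σ₂ PX) * Mproj ε₁ (-σ₂ • (PX ⊗ₖ PY)) * Mproj ε₂ (-σ₁ • (PY ⊗ₖ PX)) := by
        rw [Mproj_comm ε₁ commA]
end

section
/- For all signs σ₁, σ₂ ∈ {1,-1} and all measurement-outcome signs ε₁, ε₂ ∈ {1,-1}, the two fusion projectors propagate through the mixed tensor product U_Z^{σ₁} ⊗ U_X^{σ₂} as follows: M_{ε₁}(X ⊗ Z) * M_{ε₂}(Z ⊗ X) * (U_Z^{σ₁} ⊗ U_X^{σ₂}) = (U_Z^{σ₁} ⊗ U_X^{σ₂}) * M_{ε₁}(-σ₁•σ₂•(Y ⊗ Y)) * M_{ε₂}(Z ⊗ X) as 4×4 complex matrices, where ⊗ denotes the Kronecker product. -/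
open Matrix Kronecker

noncomputable def cc : ℂ := ((Real.sqrt 2 / 2 : ℝ) : ℂ)

lemma exp_pos_quarter : Complex.exp ((Real.pi/4 : ℂ) * Complex.I) = cc * (1 + Complex.I) := by
  rw [show (Real.pi/4 : ℂ) = ((Real.pi/4 : ℝ) : ℂ) by push_cast; ring,
    Complex.exp_mul_I, ← Complex.ofReal_cos, ← Complex.ofReal_sin,
    Real.cos_pi_div_four, Real.sin_pi_div_four, cc]
  push_cast; ring

lemma exp_neg_quarter : Complex.exp (-((Real.pi/4 : ℂ) * Complex.I)) = cc * (1 - Complex.I) := by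
  rw [show -((Real.pi/4 : ℂ) * Complex.I) = ((-(Real.pi/4) : ℝ) : ℂ) * Complex.I by push_cast; ring,
    Complex.exp_mul_I, ← Complex.ofReal_cos, ← Complex.ofReal_sin,
    Real.cos_neg, Real.sin_neg, Real.cos_pi_div_four, Real.sin_pi_div_four, cc]
  push_cast; ring

lemma UZ_form (σ : ℂ) (hσ : σ = 1 ∨ σ = -1) :
    U σ PZ = cc • !![1 + σ * Complex.I, 0; 0, 1 - σ * Complex.I] := by
  have h : σ • ((Real.pi / 4 : ℂ) • (Complex.I • PZ)) =
      Matrix.diagonal ![σ * ((Real.pi/4 : ℂ) * Complex.I), -(σ * ((Real.pi/4 : ℂ) * Complex.I))] := by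
    ext i j
    fin_cases i <;> fin_cases j <;> simp [PZ, Matrix.diagonal] <;> ring
  rw [U, h, Matrix.exp_diagonal, Pi.exp_def]
  rcases hσ with h1 | h1 <;> subst h1 <;>
  · ext i j
    fin_cases i <;> fin_cases j <;>
      simp [Matrix.diagonal, ← Complex.exp_eq_exp_ℂ] <;>
      (try rw [exp_pos_quarter]) <;> (try rw [exp_neg_quarter]) <;> ring

noncomputable def Hu : (Matrix (Fin 2) (Fin 2) ℂ)ˣ where
  val := !![1, 1; 1, -1]
  inv := !![2⁻¹, 2⁻¹; 2⁻¹, -2⁻¹]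
  val_inv := by ext i j; fin_cases i <;> fin_cases j <;> simp [Matrix.mul_apply, Fin.sum_univ_two] <;> norm_num
  inv_val := by ext i j; fin_cases i <;> fin_cases j <;> simp [Matrix.mul_apply, Fin.sum_univ_two] <;> norm_num

lemma UX_form (σ : ℂ) (hσ : σ = 1 ∨ σ = -1) :
    U σ PX = cc • !![1, σ * Complex.I; σ * Complex.I, 1] := by
  have h : σ • ((Real.pi / 4 : ℂ) • (Complex.I • PX)) =
      (Hu : Matrix (Fin 2) (Fin 2) ℂ) * (σ • ((Real.pi / 4 : ℂ) • (Complex.I • PZ))) *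
        ((Hu⁻¹ : (Matrix (Fin 2) (Fin 2) ℂ)ˣ) : Matrix (Fin 2) (Fin 2) ℂ) := by
    ext i j
    fin_cases i <;> fin_cases j <;>
      simp [PX, PZ, Hu, Matrix.mul_apply, Fin.sum_univ_two] <;> ring
  rw [U, h, Matrix.exp_units_conj, ← U, UZ_form σ hσ]
  ext i j
  fin_cases i <;> fin_cases j <;>
    simp [Hu, Matrix.mul_apply, Fin.sum_univ_two] <;> ring

lemma commZ (σ : ℂ) (hσ : σ = 1 ∨ σ = -1) : PZ * U σ PZ = U σ PZ * PZ := by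
  rw [UZ_form σ hσ]
  ext i j
  fin_cases i <;> fin_cases j <;>
    simp [PZ, Matrix.mul_apply, Fin.sum_univ_two] <;> ring

lemma commX (σ : ℂ) (hσ : σ = 1 ∨ σ = -1) : PX * U σ PX = U σ PX * PX := by
  rw [UX_form σ hσ]
  ext i j
  fin_cases i <;> fin_cases j <;>
    simp [PX, Matrix.mul_apply, Fin.sum_univ_two] <;> ring

lemma twistZ (σ : ℂ) (hσ : σ = 1 ∨ σ = -1) : PX * U σ PZ = σ • (U σ PZ * PY) := by
  rw [UZ_form σ hσ]
  rcases hσ with h | h <;> subst h <;>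
  · ext i j
    fin_cases i <;> fin_cases j <;>
      simp [PX, PY, PZ, Matrix.mul_apply, Fin.sum_univ_two] <;>
      ring_nf <;> simp [Complex.I_sq] <;> ring

lemma twistX (σ : ℂ) (hσ : σ = 1 ∨ σ = -1) : PZ * U σ PX = (-σ) • (U σ PX * PY) := by
  rw [UX_form σ hσ]
  rcases hσ with h | h <;> subst h <;>
  · ext i j
    fin_cases i <;> fin_cases j <;>
      simp [PX, PY, PZ, Matrix.mul_apply, Fin.sum_univ_two] <;>
      ring_nf <;> simp [Complex.I_sq] <;> ring

theorem fusion_proj_propagates_through_UZ_UX (σ₁ σ₂ ε₁ ε₂ : ℂ)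
    (hσ₁ : σ₁ = 1 ∨ σ₁ = -1) (hσ₂ : σ₂ = 1 ∨ σ₂ = -1)
    (hε₁ : ε₁ = 1 ∨ ε₁ = -1) (hε₂ : ε₂ = 1 ∨ ε₂ = -1) :
    Mproj ε₁ (PX ⊗ₖ PZ) * Mproj ε₂ (PZ ⊗ₖ PX) * (U σ₁ PZ ⊗ₖ U σ₂ PX) =
      (U σ₁ PZ ⊗ₖ U σ₂ PX) * Mproj ε₁ ((-σ₁ * σ₂) • (PY ⊗ₖ PY)) * Mproj ε₂ (PZ ⊗ₖ PX) := by
  set V := U σ₁ PZ ⊗ₖ U σ₂ PX with hV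
  have key1 : (PZ ⊗ₖ PX) * V = V * (PZ ⊗ₖ PX) := by
    rw [hV, ← Matrix.mul_kronecker_mul, ← Matrix.mul_kronecker_mul,
      commZ σ₁ hσ₁, commX σ₂ hσ₂]
  have key2 : (PX ⊗ₖ PZ) * V = (-σ₁ * σ₂) • (V * (PY ⊗ₖ PY)) := by
    rw [hV, ← Matrix.mul_kronecker_mul, twistZ σ₁ hσ₁, twistX σ₂ hσ₂,
      Matrix.smul_kronecker, Matrix.kronecker_smul, ← Matrix.mul_kronecker_mul, smul_smul]
    ring_nf
  have hM2 : Mproj ε₂ (PZ ⊗ₖ PX) * V = V * Mproj ε₂ (PZ ⊗ₖ PX) := by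
    simp only [Mproj, Matrix.smul_mul, Matrix.mul_smul, add_mul, mul_add,
      one_mul, mul_one, key1]
  have hM1 : Mproj ε₁ (PX ⊗ₖ PZ) * V = V * Mproj ε₁ ((-σ₁ * σ₂) • (PY ⊗ₖ PY)) := by
    simp only [Mproj, Matrix.smul_mul, Matrix.mul_smul, add_mul, mul_add,
      one_mul, mul_one, key2]
  rw [mul_assoc, hM2, ← mul_assoc, hM1, mul_assoc]
end
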